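/- Let $F:\mathbb{R}^d\to\mathbb{R}$ be convex and $\beta$-smooth on a closed convex set $\Gamma$, let $w,w^*\in\Gamma$, let $g\in\mathbb{R}^d$, let $0<\eta<1/\beta$ and $w^+ = \Pi_\Gamma[w-\eta g]$. Then $F(w^+) \le F(w) + g^\top(w^* - w) + \tfrac{1}{2\eta}\big(\|w-w^*\|_2^2 - \|w^+-w^*\|_2^2\big) + \tfrac{\eta}{2(1-\eta\beta)}\|\nabla F(w) - g\|_2^2$. -/

import Mathlib

open RealInnerProductSpace

-- quadratic upper bound lemma
theorem quad_upper {E : Type*} [NormedAddCommGroup E] [InnerProductSpace ℝ E] [CompleteSpace E]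
    (Γ : Set E) (hconv : Convex ℝ Γ)
    (F : E → ℝ) (gradF : E → E) (β : ℝ)
    (hFgrad : ∀ x ∈ Γ, HasGradientAt F (gradF x) x)
    (hFsmooth : ∀ x ∈ Γ, ∀ y ∈ Γ, ‖gradF x - gradF y‖ ≤ β * ‖x - y‖)
    (x : E) (hx : x ∈ Γ) (y : E) (hy : y ∈ Γ) :
    F y ≤ F x + ⟪gradF x, y - x⟫ + β / 2 * ‖y - x‖ ^ 2 := by
  set v := y - x with hv
  have hseg : ∀ t ∈ Set.Icc (0:ℝ) 1, x + t • v ∈ Γ := by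
    intro t ht
    have := hconv hx hy (by linarith [ht.1, ht.2] : (0:ℝ) ≤ 1 - t) ht.1 (by ring)
    convert this using 1
    simp [hv]
    module
  set φ : ℝ → ℝ := fun t => F (x + t • v) - t * ⟪gradF x, v⟫ - β / 2 * t ^ 2 * ‖v‖ ^ 2 with hφ
  have hderiv : ∀ t ∈ Set.Icc (0:ℝ) 1, HasDerivAt φ
      (⟪gradF (x + t • v), v⟫ - ⟪gradF x, v⟫ - β * t * ‖v‖ ^ 2) t := by
    intro t ht
    have hc : HasDerivAt (fun t : ℝ => x + t • v) v t := by
      simpa using ((hasDerivAt_id t).smul_const v).const_add x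
    have hF := ((hFgrad _ (hseg t ht)).hasFDerivAt.comp_hasDerivAt t hc)
    have h1 : HasDerivAt (fun t : ℝ => F (x + t • v)) ⟪gradF (x + t • v), v⟫ t := by
      simp only [InnerProductSpace.toDual_apply_apply] at hF
      exact hF
    have h2 : HasDerivAt (fun t : ℝ => t * ⟪gradF x, v⟫) ⟪gradF x, v⟫ t := by
      simpa using (hasDerivAt_id t).mul_const _
    have h3 : HasDerivAt (fun t : ℝ => β / 2 * t ^ 2 * ‖v‖ ^ 2) (β * t * ‖v‖ ^ 2) t := by
      have := ((hasDerivAt_pow 2 t).const_mul (β / 2)).mul_const (‖v‖ ^ 2)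
      refine this.congr_deriv ?_
      simp only [Nat.cast_ofNat, show (2:ℕ) - 1 = 1 from rfl, pow_one]
      ring
    exact (h1.sub h2).sub h3
  have hanti : AntitoneOn φ (Set.Icc 0 1) := by
    apply antitoneOn_of_deriv_nonpos (convex_Icc 0 1)
    · exact fun t ht => (hderiv t ht).continuousAt.continuousWithinAt
    · intro t ht
      rw [interior_Icc] at ht
      exact ((hderiv t (Set.mem_Icc_of_Ioo ht)).differentiableAt.differentiableWithinAt)
    · intro t ht
      rw [interior_Icc] at ht
      rw [(hderiv t (Set.mem_Icc_of_Ioo ht)).deriv]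
      have hb := hFsmooth _ (hseg t (Set.mem_Icc_of_Ioo ht)) x hx
      have : (x + t • v) - x = t • v := by abel
      rw [this] at hb
      have hin : ⟪gradF (x + t • v) - gradF x, v⟫ ≤ ‖gradF (x + t • v) - gradF x‖ * ‖v‖ :=
        real_inner_le_norm _ _
      rw [inner_sub_left] at hin
      have hnorm : ‖t • v‖ = t * ‖v‖ := by
        rw [norm_smul, Real.norm_eq_abs, abs_of_pos ht.1]
      rw [hnorm] at hb
      nlinarith [norm_nonneg v, ht.1.le]
  have := hanti (Set.left_mem_Icc.2 one_pos.le) (Set.right_mem_Icc.2 one_pos.le) one_pos.le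
  have hxy : x + v = y := by simp [hv]
  simp [hφ, hxy] at this
  linarith

/-- Per-step descent inequality for projected SGD with an inexact gradient `g`:
if `F` is convex and `β`-smooth on the closed convex set `Γ`, `0 < η < 1/β`, and
`wplus` is the Euclidean projection of `w - η • g` onto `Γ`, then
`F(wplus) ≤ F(w) + ⟪g, w* - w⟫ + (1/(2η))(‖w-w*‖² - ‖wplus-w*‖²)
            + (η/(2(1-ηβ))) ‖∇F(w) - g‖²`. -/
theorem projected_sgd_descent_inequality
    {d : ℕ} (Γ : Set (EuclideanSpace ℝ (Fin d)))
    (hne : Γ.Nonempty) (hclosed : IsClosed Γ) (hconv : Convex ℝ Γ)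
    (F : EuclideanSpace ℝ (Fin d) → ℝ)
    (gradF : EuclideanSpace ℝ (Fin d) → EuclideanSpace ℝ (Fin d))
    (β : ℝ) (hβ : 0 < β)
    (hFconv : ConvexOn ℝ Γ F)
    (hFgrad : ∀ x ∈ Γ, HasGradientAt F (gradF x) x)
    (hFsmooth : ∀ x ∈ Γ, ∀ y ∈ Γ, ‖gradF x - gradF y‖ ≤ β * ‖x - y‖)
    (w wstar : EuclideanSpace ℝ (Fin d)) (hw : w ∈ Γ) (hws : wstar ∈ Γ)
    (g : EuclideanSpace ℝ (Fin d))
    (η : ℝ) (hη0 : 0 < η) (hη : η < 1 / β)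
    (wplus : EuclideanSpace ℝ (Fin d)) (hmem : wplus ∈ Γ)
    (hproj : ∀ z ∈ Γ, ⟪z - wplus, (w - η • g) - wplus⟫ ≤ (0 : ℝ)) :
    F wplus ≤ F w + ⟪g, wstar - w⟫
        + (1 / (2 * η)) * (‖w - wstar‖ ^ 2 - ‖wplus - wstar‖ ^ 2)
        + (η / (2 * (1 - η * β))) * ‖gradF w - g‖ ^ 2 := by
  have hc : 0 < 1 - η * β := by
    have : η * β < 1 := (lt_div_iff₀ hβ).mp hη
    linarith
  -- quadratic upper bound
  have hquad := quad_upper Γ hconv F gradF β hFgrad hFsmooth w hw wplus hmem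
  -- projection inequality with z = wstar
  have hp := hproj wstar hws
  have hp' : η * ⟪g, wplus - wstar⟫ ≤ ⟪w - wplus, wplus - wstar⟫ := by
    have h1 : (w - η • g) - wplus = (w - wplus) - η • g := by abel
    rw [h1, inner_sub_right, inner_smul_right] at hp
    have h2 : ⟪wstar - wplus, w - wplus⟫ = - ⟪w - wplus, wplus - wstar⟫ := by
      rw [real_inner_comm]
      rw [show wstar - wplus = -(wplus - wstar) by abel, inner_neg_right]
    have h3 : ⟪wstar - wplus, g⟫ = - ⟪g, wplus - wstar⟫ := by
      rw [real_inner_comm]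
      rw [show wstar - wplus = -(wplus - wstar) by abel, inner_neg_right]
    rw [h2, h3] at hp
    linarith
  -- inner product identity
  have hid : 2 * ⟪w - wplus, wplus - wstar⟫
      = ‖w - wstar‖ ^ 2 - ‖w - wplus‖ ^ 2 - ‖wplus - wstar‖ ^ 2 := by
    have := norm_add_sq_real (w - wplus) (wplus - wstar)
    have h4 : (w - wplus) + (wplus - wstar) = w - wstar := by abel
    rw [h4] at this
    linarith
  -- decompose gradient inner product
  have hdec : ⟪gradF w, wplus - w⟫
      = ⟪g, wstar - w⟫ + ⟪g, wplus - wstar⟫ + ⟪gradF w - g, wplus - w⟫ := by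
    rw [inner_sub_left, ← inner_add_right]
    have : (wstar - w) + (wplus - wstar) = wplus - w := by abel
    rw [this]; ring
  -- Cauchy-Schwarz + Young
  set A := ‖gradF w - g‖ with hA
  set B := ‖wplus - w‖ with hB
  have hcs : ⟪gradF w - g, wplus - w⟫ ≤ A * B := real_inner_le_norm _ _
  have hyoung : A * B ≤ η / (2 * (1 - η * β)) * A ^ 2 + (1 - η * β) / (2 * η) * B ^ 2 := by
    rw [div_mul_eq_mul_div, div_mul_eq_mul_div, div_add_div _ _ (by positivity) (by positivity),
      le_div_iff₀ (by positivity)]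
    nlinarith [sq_nonneg (η * A - (1 - η * β) * B)]
  have hBnorm : ‖w - wplus‖ = B := by rw [hB, norm_sub_rev]
  rw [hBnorm] at hid
  have hgin : ⟪g, wplus - wstar⟫ ≤ (1 / (2*η)) * (‖w - wstar‖ ^ 2 - B ^ 2 - ‖wplus - wstar‖ ^ 2) := by
    rw [one_div, inv_mul_eq_div, le_div_iff₀ (by positivity)]
    nlinarith [hp', hid]
  have hfinal : F wplus ≤ F w + ⟪g, wstar - w⟫
      + (1 / (2*η)) * (‖w - wstar‖ ^ 2 - B ^ 2 - ‖wplus - wstar‖ ^ 2)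
      + η / (2 * (1 - η * β)) * A ^ 2 + (1 - η * β) / (2 * η) * B ^ 2 + β / 2 * B ^ 2 := by
    linarith [hquad, hdec ▸ hquad, hcs, hyoung, hgin]
  have hcancel : -(1 / (2*η)) * B ^ 2 + (1 - η * β) / (2 * η) * B ^ 2 + β / 2 * B ^ 2 = 0 := by
    field_simp
    ring
  calc F wplus ≤ _ := hfinal
    _ = F w + ⟪g, wstar - w⟫ + (1 / (2 * η)) * (‖w - wstar‖ ^ 2 - ‖wplus - wstar‖ ^ 2)
        + (η / (2 * (1 - η * β))) * A ^ 2 := by field_simp; ring
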